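/- Let E and n be natural numbers with 1 ≤ n ≤ E. Then the n-particle configuration graph D^n(S̄_E) has exactly C(E+1, n) vertices and exactly E·C(E−1, n−1) edges. -/

import Mathlib

open Finset

/-- The (non-subdivided) star graph `S̄_E` on `Fin (E+1)`: the hub `0` is adjacent
to each of the leaves `1, …, E`, and there are no other edges. -/
def starGraph (E : ℕ) : SimpleGraph (Fin (E + 1)) where
  Adj v w := (v = 0 ∧ w ≠ 0) ∨ (w = 0 ∧ v ≠ 0)
  symm := by tauto
  loopless := by constructor; intro v h; tauto

/-- The `n`-particle combinatorial configuration graph `D^n(S̄_E)`: vertices are the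
`n`-element subsets of `Fin (E+1)`, and `A` is adjacent to `B` iff their symmetric
difference is `{0, k}` for some leaf `k`. -/
def configGraph (E n : ℕ) : SimpleGraph {A : Finset (Fin (E + 1)) // A.card = n} where
  Adj A B := ∃ k : Fin (E + 1), k ≠ 0 ∧ symmDiff A.1 B.1 = {0, k}
  symm := by
    constructor
    rintro A B ⟨k, hk, h⟩
    exact ⟨k, hk, by rwa [symmDiff_comm]⟩
  loopless := by
    constructor
    rintro A ⟨k, hk, h⟩
    rw [symmDiff_self] at h
    exact (Finset.insert_ne_empty 0 {k}) h.symm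

lemma decomp {α : Type*} [DecidableEq α] {A B : Finset α} {a b : α}
    (hcard : A.card = B.card) (hab : b ≠ a) (h : symmDiff A B = {a, b}) (haA : a ∈ A) :
    a ∉ B ∧ b ∈ B ∧ b ∉ A ∧ A = insert a (A ∩ B) ∧ B = insert b (A ∩ B) := by
  have ha : a ∈ symmDiff A B := by rw [h]; exact mem_insert_self _ _
  have hb : b ∈ symmDiff A B := by rw [h]; exact mem_insert_of_mem (mem_singleton_self _)
  rw [Finset.mem_symmDiff] at ha hb
  have haB : a ∉ B := by tauto
  have hbB : b ∈ B := by
    by_contra hbB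
    have hbA : b ∈ A := by tauto
    have hBA : B ⊆ A := by
      intro x hx
      by_contra hxA
      have hx2 : x ∈ symmDiff A B := Finset.mem_symmDiff.2 (Or.inr ⟨hx, hxA⟩)
      rw [h, mem_insert, mem_singleton] at hx2
      rcases hx2 with rfl | rfl <;> tauto
    have h0 : (A \ B).card = 0 := by
      have := Finset.card_sdiff_add_card_eq_card hBA
      omega
    have hmem : a ∈ A \ B := Finset.mem_sdiff.2 ⟨haA, haB⟩
    rw [Finset.card_eq_zero] at h0
    simp [h0] at hmem
  have hbA : b ∉ A := by tauto
  refine ⟨haB, hbB, hbA, ?_, ?_⟩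
  · ext x
    simp only [mem_insert, mem_inter]
    constructor
    · intro hx
      by_cases hxa : x = a
      · exact Or.inl hxa
      · refine Or.inr ⟨hx, ?_⟩
        by_contra hxB
        have hx2 : x ∈ symmDiff A B := Finset.mem_symmDiff.2 (Or.inl ⟨hx, hxB⟩)
        rw [h, mem_insert, mem_singleton] at hx2
        rcases hx2 with rfl | rfl <;> tauto
    · rintro (rfl | ⟨hx, _⟩) <;> assumption
  · ext x
    simp only [mem_insert, mem_inter]
    constructor
    · intro hx
      by_cases hxb : x = b
      · exact Or.inl hxb
      · refine Or.inr ⟨?_, hx⟩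
        by_contra hxA
        have hx2 : x ∈ symmDiff A B := Finset.mem_symmDiff.2 (Or.inr ⟨hx, hxA⟩)
        rw [h, mem_insert, mem_singleton] at hx2
        rcases hx2 with rfl | rfl <;> tauto
    · rintro (rfl | ⟨_, hx⟩) <;> assumption

lemma symmDiff_inserts {α : Type*} [DecidableEq α] {S : Finset α} {a b : α}
    (hab : b ≠ a) (haS : a ∉ S) (hbS : b ∉ S) :
    symmDiff (insert a S) (insert b S) = {a, b} := by
  have hab' : a ≠ b := fun h => hab h.symm
  ext x
  simp only [Finset.mem_symmDiff, mem_insert, mem_singleton]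
  constructor
  · rintro (⟨h1, h2⟩ | ⟨h1, h2⟩) <;> rcases h1 with rfl | h1 <;> tauto
  · rintro (rfl | rfl) <;> [left; right] <;> exact ⟨Or.inl rfl, by tauto⟩

lemma memT_facts {E n : ℕ} {a : Σ _ : Fin (E+1), Finset (Fin (E+1))}
    (ha : a ∈ (univ.filter fun k : Fin (E+1) => k ≠ 0).sigma
        (fun k => (univ \ {0, k}).powersetCard (n-1))) :
    a.1 ≠ 0 ∧ 0 ∉ a.2 ∧ a.1 ∉ a.2 ∧ a.2.card = n - 1 := by
  rw [Finset.mem_sigma, mem_filter, Finset.mem_powersetCard] at ha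
  obtain ⟨⟨_, h1⟩, h2, h3⟩ := ha
  refine ⟨h1, ?_, ?_, h3⟩
  · intro h; have := h2 h; simp at this
  · intro h; have := h2 h; simp at this

theorem configGraph_star_card (E n : ℕ) (hn : 1 ≤ n) (hE : n ≤ E) :
    Fintype.card {A : Finset (Fin (E + 1)) // A.card = n} = (E + 1).choose n ∧
    (configGraph E n).edgeSet.ncard = E * (E - 1).choose (n - 1) := by
  classical
  constructor
  · simpa using Fintype.card_finset_len n (α := Fin (E+1))
  · have hfin : (configGraph E n).edgeSet.Finite := Set.toFinite _
    rw [Set.ncard_eq_toFinset_card _ hfin]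
    set T := (univ.filter fun k : Fin (E+1) => k ≠ 0).sigma
        (fun k => (univ \ {0, k}).powersetCard (n-1)) with hT
    have hTcard : T.card = E * (E-1).choose (n-1) := by
      rw [hT, Finset.card_sigma]
      have hterm : ∀ k ∈ univ.filter fun k : Fin (E+1) => k ≠ 0,
          ((univ \ ({0, k} : Finset (Fin (E+1)))).powersetCard (n-1)).card
            = (E-1).choose (n-1) := by
        intro k hk
        rw [mem_filter] at hk
        rw [Finset.card_powersetCard, card_sdiff_of_subset (subset_univ _), card_univ,
          Fintype.card_fin, Finset.card_pair (fun h => hk.2 h.symm)]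
        congr 1
      rw [Finset.sum_congr rfl hterm, Finset.sum_const, smul_eq_mul]
      congr 1
      rw [Finset.filter_ne', Finset.card_erase_of_mem (mem_univ _), card_univ,
        Fintype.card_fin]
      omega
    rw [← hTcard]
    refine (Finset.card_bij
      (fun a ha => s((⟨insert 0 a.2, by
          have h := memT_facts ha
          rw [card_insert_of_notMem h.2.1, h.2.2.2]; omega⟩ :
            {A : Finset (Fin (E + 1)) // A.card = n}),
        ⟨insert a.1 a.2, by
          have h := memT_facts ha
          rw [card_insert_of_notMem h.2.2.1, h.2.2.2]; omega⟩))
      ?_ ?_ ?_).symm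
    · intro a ha
      have h := memT_facts ha
      rw [Set.Finite.mem_toFinset, SimpleGraph.mem_edgeSet]
      exact ⟨a.1, h.1, symmDiff_inserts h.1 h.2.1 h.2.2.1⟩
    · intro a1 ha1 a2 ha2 heq
      have h1 := memT_facts ha1
      have h2 := memT_facts ha2
      rw [Sym2.eq_iff] at heq
      rcases heq with ⟨hx, hy⟩ | ⟨hx, hy⟩
      · have hS : a1.2 = a2.2 := by
          have := congrArg Subtype.val hx
          simp only at this
          have := congrArg (fun s => Finset.erase s 0) this
          simpa [Finset.erase_insert h1.2.1, Finset.erase_insert h2.2.1] using this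
        have hk : a1.1 = a2.1 := by
          have hv := congrArg Subtype.val hy
          simp only at hv
          have : a1.1 ∈ insert a2.1 a2.2 := hv ▸ mem_insert_self _ _
          rcases mem_insert.1 this with h | h
          · exact h
          · exact absurd (hS ▸ h) h1.2.2.1
        obtain ⟨k1, S1⟩ := a1
        obtain ⟨k2, S2⟩ := a2
        simp only at hk hS
        subst hk; subst hS; rfl
      · exfalso
        have hv := congrArg Subtype.val hx
        simp only at hv
        have : (0 : Fin (E+1)) ∈ insert a2.1 a2.2 := hv ▸ mem_insert_self _ _
        rcases mem_insert.1 this with h | h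
        · exact h2.1 h.symm
        · exact h2.2.1 h
    · intro e he
      induction e using Sym2.ind with
      | _ A B =>
        rw [Set.Finite.mem_toFinset, SimpleGraph.mem_edgeSet] at he
        obtain ⟨k, hk, hsd⟩ := he
        have hcard : A.1.card = B.1.card := A.2.trans B.2.symm
        by_cases h0 : (0 : Fin (E+1)) ∈ A.1
        · obtain ⟨h0B, hkB, hkA, hAeq, hBeq⟩ := decomp hcard hk hsd h0
          have h0S : (0 : Fin (E+1)) ∉ A.1 ∩ B.1 := fun h => h0B (mem_inter.1 h).2
          have hkS : k ∉ A.1 ∩ B.1 := fun h => hkA (mem_inter.1 h).1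
          have hScard : (A.1 ∩ B.1).card = n - 1 := by
            have := congrArg Finset.card hAeq
            rw [card_insert_of_notMem h0S, A.2] at this
            omega
          refine ⟨⟨k, A.1 ∩ B.1⟩, ?_, ?_⟩
          · rw [hT, Finset.mem_sigma, mem_filter, Finset.mem_powersetCard]
            refine ⟨⟨mem_univ _, hk⟩, fun x hx => ?_, hScard⟩
            rw [mem_sdiff, mem_insert, mem_singleton]
            refine ⟨mem_univ _, ?_⟩
            rintro (rfl | rfl)
            · exact h0S hx
            · exact hkS hx
          · rw [Sym2.eq_iff]
            exact Or.inl ⟨Subtype.ext hAeq.symm, Subtype.ext hBeq.symm⟩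
        · have h0B : (0 : Fin (E+1)) ∈ B.1 := by
            have : (0 : Fin (E+1)) ∈ symmDiff A.1 B.1 := by
              rw [hsd]; exact mem_insert_self _ _
            rw [Finset.mem_symmDiff] at this
            tauto
          have hsd' : symmDiff B.1 A.1 = {0, k} := by rwa [symmDiff_comm]
          obtain ⟨h0A, hkA, hkB, hBeq, hAeq⟩ := decomp hcard.symm hk hsd' h0B
          have h0S : (0 : Fin (E+1)) ∉ B.1 ∩ A.1 := fun h => h0A (mem_inter.1 h).2
          have hkS : k ∉ B.1 ∩ A.1 := fun h => hkB (mem_inter.1 h).1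
          have hScard : (B.1 ∩ A.1).card = n - 1 := by
            have := congrArg Finset.card hBeq
            rw [card_insert_of_notMem h0S, B.2] at this
            omega
          refine ⟨⟨k, B.1 ∩ A.1⟩, ?_, ?_⟩
          · rw [hT, Finset.mem_sigma, mem_filter, Finset.mem_powersetCard]
            refine ⟨⟨mem_univ _, hk⟩, fun x hx => ?_, hScard⟩
            rw [mem_sdiff, mem_insert, mem_singleton]
            refine ⟨mem_univ _, ?_⟩
            rintro (rfl | rfl)
            · exact h0S hx
            · exact hkS hx
          · rw [Sym2.eq_iff]
            exact Or.inr ⟨Subtype.ext hBeq.symm, Subtype.ext hAeq.symm⟩
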